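/- Let P ∈ ℝ^{n×n} be symmetric positive definite and β > 0, and let 𝒜 be a set of matrices in ℝ^{n×n} such that A P Aᵀ ⪯ P − βI for every A ∈ 𝒜. Set c := √(1 − β/λmax(P)), where λmax(P) is the largest eigenvalue of P, so 0 ≤ c < 1. Let D ⊆ ℝⁿ and d̄ ≥ 0 satisfy dᵀ P⁻¹ d ≤ d̄² for all d ∈ D, and let r ≥ d̄/(1 − c). Then the ellipsoid E(r) := { e ∈ ℝⁿ : eᵀ P⁻¹ e ≤ r² } is robust positively invariant: for every A ∈ 𝒜, every e ∈ E(r), and every d ∈ D, the successor A e + d belongs to E(r). -/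

import Mathlib

open Matrix

lemma symmQF {n : ℕ} {M : Matrix (Fin n) (Fin n) ℝ} (hM : M.IsHermitian)
    (x y : Fin n → ℝ) : x ⬝ᵥ M.mulVec y = y ⬝ᵥ M.mulVec x := by
  have ht : Mᵀ = M := by
    have := hM; rwa [IsHermitian, conjTranspose_eq_transpose_of_trivial] at this
  rw [dotProduct_mulVec x, ← mulVec_transpose, ht, dotProduct_comm]

lemma csPSD {n : ℕ} {M : Matrix (Fin n) (Fin n) ℝ} (hM : M.PosSemidef)
    (x y : Fin n → ℝ) :
    (x ⬝ᵥ M.mulVec y) ^ 2 ≤ (x ⬝ᵥ M.mulVec x) * (y ⬝ᵥ M.mulVec y) := by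
  have key : ∀ t : ℝ, 0 ≤ (y ⬝ᵥ M.mulVec y) * (t * t) + (2 * (x ⬝ᵥ M.mulVec y)) * t
      + (x ⬝ᵥ M.mulVec x) := by
    intro t
    have h0 := hM.dotProduct_mulVec_nonneg (x + t • y)
    rw [star_trivial] at h0
    have hsym := symmQF hM.1 x y
    simp only [dotProduct_add, add_dotProduct, mulVec_add, mulVec_smul,
      dotProduct_smul, smul_dotProduct, smul_eq_mul] at h0
    have he : (y ⬝ᵥ M.mulVec y) * (t * t) + (2 * (x ⬝ᵥ M.mulVec y)) * t
        + (x ⬝ᵥ M.mulVec x)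
        = x ⬝ᵥ M *ᵥ x + t * (y ⬝ᵥ M *ᵥ x) + t * (x ⬝ᵥ M *ᵥ y + t * (y ⬝ᵥ M *ᵥ y)) := by
      rw [hsym]; ring
    rw [he]; exact h0
  have := discrim_le_zero key
  rw [discrim] at this
  nlinarith [this]
open Matrix

lemma lamBound {n : ℕ} {P : Matrix (Fin n) (Fin n) ℝ} (hP : P.IsHermitian)
    (x : Fin n → ℝ) :
    x ⬝ᵥ P.mulVec x ≤ (⨆ i, hP.eigenvalues i) * (x ⬝ᵥ x) := by
  set lam := ⨆ i, hP.eigenvalues i with hlam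
  have hle : ∀ i, hP.eigenvalues i ≤ lam :=
    fun i => le_ciSup (Set.Finite.bddAbove (Set.finite_range _)) i
  have hpsd : (lam • (1 : Matrix (Fin n) (Fin n) ℝ) - P).PosSemidef := by
    have hspec := hP.spectral_theorem
    set U := (hP.eigenvectorUnitary : Matrix (Fin n) (Fin n) ℝ) with hU
    have hUU : U * star U = 1 := (Matrix.mem_unitaryGroup_iff).mp hP.eigenvectorUnitary.2
    have hdiag : lam • (1 : Matrix (Fin n) (Fin n) ℝ) - P
        = U * (diagonal (fun i => lam - hP.eigenvalues i)) * star U := by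
      have h1 : lam • (1 : Matrix (Fin n) (Fin n) ℝ)
          = U * (lam • (1 : Matrix (Fin n) (Fin n) ℝ)) * star U := by
        rw [Matrix.mul_smul, Matrix.smul_mul, mul_one, hUU]
      have h2 : (diagonal (fun i => lam - hP.eigenvalues i) : Matrix (Fin n) (Fin n) ℝ)
          = lam • (1 : Matrix (Fin n) (Fin n) ℝ) - diagonal (RCLike.ofReal ∘ hP.eigenvalues) := by
        rw [smul_one_eq_diagonal, diagonal_sub]
        rfl
      rw [h2, Matrix.mul_sub, Matrix.sub_mul, ← h1]; exact congrArg (lam • (1 : Matrix (Fin n) (Fin n) ℝ) - ·) hspec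
    rw [hdiag]
    have hd : (diagonal (fun i => lam - hP.eigenvalues i) :
        Matrix (Fin n) (Fin n) ℝ).PosSemidef := by
      rw [posSemidef_diagonal_iff]
      intro i; simp [sub_nonneg, hle i]
    have := hd.mul_mul_conjTranspose_same U
    rwa [← star_eq_conjTranspose] at this
  have h0 := hpsd.dotProduct_mulVec_nonneg x
  rw [star_trivial] at h0
  simp only [sub_mulVec, smul_mulVec, one_mulVec, dotProduct_sub,
    dotProduct_smul, smul_eq_mul] at h0
  linarith


set_option maxHeartbeats 1000000 in
/-- If every `A ∈ 𝒜` satisfies `A P Aᵀ ⪯ P - βI` with `P ≻ 0`, `β > 0`, and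
`c := √(1 - β/λmax(P))`, `D` has `P⁻¹`-norm bound `d̄`, and `r ≥ d̄/(1 - c)`, then the
ellipsoid `{e : eᵀ P⁻¹ e ≤ r²}` is robust positively invariant for `e⁺ = A e + d`. -/
theorem stmt12 {n : ℕ} (hn : 0 < n) (P : Matrix (Fin n) (Fin n) ℝ) (hP : P.PosDef)
    (β : ℝ) (hβ : 0 < β)
    (𝒜 : Set (Matrix (Fin n) (Fin n) ℝ))
    (hA : ∀ A ∈ 𝒜, (P - β • (1 : Matrix (Fin n) (Fin n) ℝ) - A * P * Aᵀ).PosSemidef)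
    (c : ℝ) (hc : c = Real.sqrt (1 - β / (⨆ i, hP.isHermitian.eigenvalues i)))
    (D : Set (Fin n → ℝ)) (dbar : ℝ) (hdbar : 0 ≤ dbar)
    (hD : ∀ d ∈ D, d ⬝ᵥ P⁻¹.mulVec d ≤ dbar ^ 2)
    (r : ℝ) (hr : dbar / (1 - c) ≤ r) :
    (0 ≤ c ∧ c < 1) ∧
      ∀ A ∈ 𝒜, ∀ e : Fin n → ℝ, e ⬝ᵥ P⁻¹.mulVec e ≤ r ^ 2 →
        ∀ d ∈ D, (A.mulVec e + d) ⬝ᵥ P⁻¹.mulVec (A.mulVec e + d) ≤ r ^ 2 := by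
  set lam := ⨆ i, hP.isHermitian.eigenvalues i with hlamdef
  have i0 : Fin n := ⟨0, hn⟩
  have hlam : 0 < lam :=
    lt_of_lt_of_le (hP.eigenvalues_pos i0)
      (le_ciSup (Set.Finite.bddAbove (Set.finite_range _)) i0)
  have hc0 : 0 ≤ c := hc ▸ Real.sqrt_nonneg _
  have hc1 : c < 1 := by
    rw [hc, Real.sqrt_lt' one_pos]
    have : 0 < β / lam := div_pos hβ hlam
    nlinarith
  have h1c : 0 < 1 - c := by linarith
  have hr0 : 0 ≤ r := le_trans (div_nonneg hdbar h1c.le) hr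
  have hrd : dbar ≤ (1 - c) * r := by
    rw [div_le_iff₀ h1c] at hr; linarith [hr]
  refine ⟨⟨hc0, hc1⟩, ?_⟩
  intro A hAm e he d hd
  have hQ : (P⁻¹).PosDef := hP.inv
  have hQpsd := hQ.posSemidef
  have hPdet : IsUnit P.det := isUnit_iff_ne_zero.mpr hP.det_pos.ne'
  have hPQ : P * P⁻¹ = 1 := Matrix.mul_nonsing_inv P hPdet
  have hAPA := hA A hAm
  have hAPApsd : (A * P * Aᵀ).PosSemidef := by
    have := hP.posSemidef.mul_mul_conjTranspose_same A
    rwa [conjTranspose_eq_transpose_of_trivial] at this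
  -- β ≤ lam, so 1 - β/lam ≥ 0 and c^2 = 1 - β/lam
  have h1mb : 0 ≤ 1 - β / lam := by
    set x0 : Fin n → ℝ := Pi.single i0 1 with hx0
    have h0 := hAPA.dotProduct_mulVec_nonneg x0
    rw [star_trivial] at h0
    simp only [sub_mulVec, smul_mulVec, one_mulVec, dotProduct_sub,
      dotProduct_smul, smul_eq_mul] at h0
    have h2 := hAPApsd.dotProduct_mulVec_nonneg x0
    rw [star_trivial] at h2
    have h3 := lamBound hP.isHermitian x0
    rw [← hlamdef] at h3
    have hxx : x0 ⬝ᵥ x0 = 1 := by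
      simp [hx0, dotProduct_single]
    rw [hxx] at h0 h3
    have hβlam : β ≤ lam := by linarith
    have : β / lam ≤ 1 := (div_le_one hlam).mpr hβlam
    linarith
  have hc2 : c ^ 2 = 1 - β / lam := by
    rw [hc, Real.sq_sqrt h1mb]
  -- quadratic contraction
  have hcontr : ∀ y : Fin n → ℝ,
      y ⬝ᵥ (A * P * Aᵀ).mulVec y ≤ c ^ 2 * (y ⬝ᵥ P.mulVec y) := by
    intro y
    have h0 := hAPA.dotProduct_mulVec_nonneg y
    rw [star_trivial] at h0
    simp only [sub_mulVec, smul_mulVec, one_mulVec, dotProduct_sub,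
      dotProduct_smul, smul_eq_mul] at h0
    have h3 := lamBound hP.isHermitian y
    rw [← hlamdef] at h3
    have h4 : (β / lam) * (y ⬝ᵥ P.mulVec y) ≤ β * (y ⬝ᵥ y) := by
      have := mul_le_mul_of_nonneg_left h3 (div_pos hβ hlam).le
      calc (β / lam) * (y ⬝ᵥ P.mulVec y) ≤ (β / lam) * (lam * (y ⬝ᵥ y)) := this
        _ = β * (y ⬝ᵥ y) := by field_simp
    rw [hc2]; linarith
  -- main contraction for e
  obtain ⟨qe, hqe⟩ : ∃ q, q = e ⬝ᵥ (P⁻¹).mulVec e := ⟨_, rfl⟩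
  rw [← hqe] at he
  obtain ⟨u, hu⟩ : ∃ u, u = A.mulVec e := ⟨_, rfl⟩
  obtain ⟨y, hy⟩ : ∃ y, y = (P⁻¹).mulVec u := ⟨_, rfl⟩
  obtain ⟨L, hL⟩ : ∃ L, L = u ⬝ᵥ (P⁻¹).mulVec u := ⟨_, rfl⟩
  have hL0 : 0 ≤ L := by rw [hL]; have := hQpsd.dotProduct_mulVec_nonneg u; rwa [star_trivial] at this
  have hqe0 : 0 ≤ qe := by
    rw [hqe]; have := hQpsd.dotProduct_mulVec_nonneg e; rwa [star_trivial] at this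
  have hPQe : ∀ v : Fin n → ℝ, P.mulVec ((P⁻¹).mulVec v) = v := by
    intro v; rw [mulVec_mulVec, hPQ, one_mulVec]
  have hQsym := fun x z => symmQF hQ.isHermitian x z
  have ha : (Aᵀ.mulVec y) ⬝ᵥ P.mulVec ((P⁻¹).mulVec e) = L := by
    rw [hPQe, mulVec_transpose, ← dotProduct_mulVec, ← hu, hy, dotProduct_comm, hL]
  have hb : (Aᵀ.mulVec y) ⬝ᵥ P.mulVec (Aᵀ.mulVec y) = y ⬝ᵥ (A * P * Aᵀ).mulVec y := by
    conv_rhs => rw [← mulVec_mulVec, ← mulVec_mulVec]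
    rw [dotProduct_mulVec y, ← mulVec_transpose]
  have hyPy : y ⬝ᵥ P.mulVec y = L := by
    rw [hy, hPQe, dotProduct_comm, hL]
  have hcc : ((P⁻¹).mulVec e) ⬝ᵥ P.mulVec ((P⁻¹).mulVec e) = e ⬝ᵥ (P⁻¹).mulVec e := by
    rw [hPQe, dotProduct_comm]
  have hcs := csPSD hP.posSemidef (Aᵀ.mulVec y) ((P⁻¹).mulVec e)
  rw [ha, hb, hcc, ← hqe] at hcs
  have hcy := hcontr y
  rw [hyPy] at hcy
  have hLle : L ≤ c ^ 2 * qe := by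
    rcases eq_or_lt_of_le hL0 with h | h
    · have := mul_nonneg (sq_nonneg c) hqe0
      linarith
    · have h9 : L ^ 2 ≤ (c ^ 2 * L) * qe :=
        le_trans hcs (mul_le_mul_of_nonneg_right hcy hqe0)
      nlinarith [h9, h]
  -- wrap up with triangle inequality
  obtain ⟨qd, hqd⟩ : ∃ q, q = d ⬝ᵥ (P⁻¹).mulVec d := ⟨_, rfl⟩
  have hqd0 : 0 ≤ qd := by rw [hqd]; have := hQpsd.dotProduct_mulVec_nonneg d; rwa [star_trivial] at this
  have hqdle : qd ≤ dbar ^ 2 := by rw [hqd]; exact hD d hd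
  obtain ⟨sL, hsL⟩ : ∃ s, s = Real.sqrt L := ⟨_, rfl⟩
  obtain ⟨sd, hsd⟩ : ∃ s, s = Real.sqrt qd := ⟨_, rfl⟩
  have hsL2 : sL ^ 2 = L := by rw [hsL]; exact Real.sq_sqrt hL0
  have hsd2 : sd ^ 2 = qd := by rw [hsd]; exact Real.sq_sqrt hqd0
  have hsL0 : 0 ≤ sL := hsL ▸ Real.sqrt_nonneg _
  have hsd0 : 0 ≤ sd := hsd ▸ Real.sqrt_nonneg _
  have hsLle : sL ≤ c * r := by
    have h1 : L ≤ (c * r) ^ 2 := by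
      calc L ≤ c ^ 2 * qe := hLle
        _ ≤ c ^ 2 * r ^ 2 := mul_le_mul_of_nonneg_left he (sq_nonneg c)
        _ = (c * r) ^ 2 := by ring
    rw [hsL]
    calc Real.sqrt L ≤ Real.sqrt ((c * r) ^ 2) := Real.sqrt_le_sqrt h1
      _ = c * r := Real.sqrt_sq (by positivity)
  have hsdle : sd ≤ dbar := by
    rw [hsd]
    calc Real.sqrt qd ≤ Real.sqrt (dbar ^ 2) := Real.sqrt_le_sqrt hqdle
      _ = dbar := Real.sqrt_sq hdbar
  have hbcs := csPSD hQpsd u d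
  have hble : u ⬝ᵥ (P⁻¹).mulVec d ≤ sL * sd := by
    calc u ⬝ᵥ (P⁻¹).mulVec d ≤ |u ⬝ᵥ (P⁻¹).mulVec d| := le_abs_self _
      _ = Real.sqrt ((u ⬝ᵥ (P⁻¹).mulVec d) ^ 2) := (Real.sqrt_sq_eq_abs _).symm
      _ ≤ Real.sqrt (L * qd) := Real.sqrt_le_sqrt (by rw [hL, hqd]; exact hbcs)
      _ = sL * sd := by rw [hsL, hsd, ← Real.sqrt_mul hL0]
  have hexp : (u + d) ⬝ᵥ (P⁻¹).mulVec (u + d)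
      = L + 2 * (u ⬝ᵥ (P⁻¹).mulVec d) + qd := by
    simp only [dotProduct_add, add_dotProduct, mulVec_add]
    rw [hQsym d u, ← hL, ← hqd]; ring
  rw [← hu, hexp]
  have h5 : sL + sd ≤ r := by
    calc sL + sd ≤ c * r + dbar := add_le_add hsLle hsdle
      _ ≤ r := by nlinarith [hrd]
  have h7 : (sL + sd) ^ 2 = L + 2 * (sL * sd) + qd := by
    rw [← hsL2, ← hsd2]; ring
  have h8 : (sL + sd) ^ 2 ≤ r ^ 2 :=
    pow_le_pow_left₀ (add_nonneg hsL0 hsd0) h5 2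
  linarith [hble]
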